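/- Let d ≥ 1 and let μ_O denote the Haar probability measure on the orthogonal group O(d). For every complex d×d matrix A, the Bochner integral ∫_{O(d)} O·A·Oᵀ dμ_O(O) equals (tr(A)/d) • 1_d, where 1_d is the d×d identity matrix. -/

import Mathlib

open MeasureTheory Matrix

attribute [local instance] Matrix.normedAddCommGroup Matrix.normedSpace

/-- Entrywise coercion of a real orthogonal matrix to a complex matrix. -/
def OC {d : ℕ} (O : Matrix.orthogonalGroup (Fin d) ℝ) : Matrix (Fin d) (Fin d) ℂ :=
  (O : Matrix (Fin d) (Fin d) ℝ).map Complex.ofReal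

set_option linter.unusedSectionVars false

variable {d : ℕ}

lemma mapC_mul (A B : Matrix (Fin d) (Fin d) ℝ) :
    (A * B).map Complex.ofReal = A.map Complex.ofReal * B.map Complex.ofReal :=
  Matrix.map_mul (f := Complex.ofRealHom)

lemma mapC_one : (1 : Matrix (Fin d) (Fin d) ℝ).map Complex.ofReal = 1 :=
  Matrix.map_one _ Complex.ofReal_zero Complex.ofReal_one

lemma OC_mul (P O : Matrix.orthogonalGroup (Fin d) ℝ) : OC (P * O) = OC P * OC O := by
  rw [OC, Submonoid.coe_mul, mapC_mul]; rfl

lemma OC_transpose (O : Matrix.orthogonalGroup (Fin d) ℝ) :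
    (OC O)ᵀ = ((O : Matrix (Fin d) (Fin d) ℝ)ᵀ).map Complex.ofReal :=
  (Matrix.transpose_map).symm ▸ rfl

lemma star_coe (O : Matrix.orthogonalGroup (Fin d) ℝ) :
    star (O : Matrix (Fin d) (Fin d) ℝ) = (O : Matrix (Fin d) (Fin d) ℝ)ᵀ := by
  ext i j
  simp [Matrix.star_eq_conjTranspose, Matrix.conjTranspose_apply]

lemma OC_transpose_mul_self (O : Matrix.orthogonalGroup (Fin d) ℝ) :
    (OC O)ᵀ * OC O = 1 := by
  have h := O.2.1
  rw [star_coe] at h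
  rw [OC_transpose, OC, ← mapC_mul, h, mapC_one]

lemma OC_mul_transpose_self (O : Matrix.orthogonalGroup (Fin d) ℝ) :
    OC O * (OC O)ᵀ = 1 := by
  have h := O.2.2
  rw [star_coe] at h
  rw [OC_transpose, OC, ← mapC_mul, h, mapC_one]

lemma OC_entry_norm (O : Matrix.orthogonalGroup (Fin d) ℝ) (i j : Fin d) : ‖OC O i j‖ ≤ 1 := by
  have := entry_norm_bound_of_unitary O.2 i j
  simpa [OC] using this

lemma continuous_conj (A : Matrix (Fin d) (Fin d) ℂ) :
    Continuous (fun O : Matrix.orthogonalGroup (Fin d) ℝ => OC O * A * (OC O)ᵀ) := by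
  have hOC : Continuous (fun O : Matrix.orthogonalGroup (Fin d) ℝ => OC O) :=
    (continuous_subtype_val.matrix_map Complex.continuous_ofReal)
  exact (hOC.matrix_mul continuous_const).matrix_mul hOC.matrix_transpose

lemma norm_conj_le (A : Matrix (Fin d) (Fin d) ℂ) (O : Matrix.orthogonalGroup (Fin d) ℝ) :
    ‖OC O * A * (OC O)ᵀ‖ ≤ (d : ℝ) * d * ‖A‖ := by
  have h0 : (0:ℝ) ≤ (d : ℝ) * d * ‖A‖ := by positivity
  rw [Matrix.norm_le_iff h0]
  intro i j
  calc ‖(OC O * A * (OC O)ᵀ) i j‖ = ‖∑ l, ∑ k, OC O i k * A k l * OC O j l‖ := by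
        simp [Matrix.mul_apply, Matrix.transpose_apply, Finset.sum_mul]
  _ ≤ ∑ l, ∑ k, ‖OC O i k * A k l * OC O j l‖ :=
        (norm_sum_le _ _).trans (Finset.sum_le_sum fun l _ => norm_sum_le _ _)
  _ ≤ ∑ l : Fin d, ∑ k : Fin d, ‖A‖ := by
        refine Finset.sum_le_sum fun l _ => Finset.sum_le_sum fun k _ => ?_
        rw [norm_mul, norm_mul]
        calc ‖OC O i k‖ * ‖A k l‖ * ‖OC O j l‖ ≤ 1 * ‖A‖ * 1 := by
              have h1 := OC_entry_norm O i k
              have h2 := OC_entry_norm O j l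
              have h3 := Matrix.norm_entry_le_entrywise_sup_norm A (i := k) (j := l)
              exact mul_le_mul (mul_le_mul h1 h3 (norm_nonneg _) zero_le_one) h2
                (norm_nonneg _) (by positivity)
        _ = ‖A‖ := by ring
  _ = (d : ℝ) * d * ‖A‖ := by simp [Finset.sum_const]; ring


def signO (i : Fin d) : Matrix.orthogonalGroup (Fin d) ℝ :=
  ⟨Matrix.diagonal (fun k => if k = i then -1 else 1), by
    rw [Matrix.mem_orthogonalGroup_iff]
    rw [Matrix.diagonal_transpose]
    simp only [Pi.star_def, star_trivial, Matrix.diagonal_mul_diagonal]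
    have : (fun k => (if k = i then (-1:ℝ) else 1) * (if k = i then -1 else 1)) = fun _ => 1 := by
      funext k; by_cases h : k = i <;> simp [h]
    rw [this, Matrix.diagonal_one]⟩

def permO (σ : Equiv.Perm (Fin d)) : Matrix.orthogonalGroup (Fin d) ℝ :=
  ⟨σ.permMatrix ℝ, by
    rw [Matrix.mem_orthogonalGroup_iff]
    have hstar : star (σ.permMatrix ℝ) = (σ.permMatrix ℝ)ᵀ := by
      ext i j; simp [Matrix.star_eq_conjTranspose, Matrix.conjTranspose_apply]
    rw [Equiv.Perm.permMatrix, ← PEquiv.toMatrix_symm, ← Equiv.toPEquiv_symm,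
      ← PEquiv.toMatrix_trans, ← Equiv.toPEquiv_trans, Equiv.self_trans_symm,
      Equiv.toPEquiv_refl, PEquiv.toMatrix_refl]⟩

lemma OC_signO (i : Fin d) :
    OC (signO i) = Matrix.diagonal (fun k => if k = i then (-1:ℂ) else 1) := by
  ext a b
  by_cases h : a = b <;>
    simp [OC, signO, Matrix.diagonal, h, apply_ite Complex.ofReal]

lemma OC_permO (σ : Equiv.Perm (Fin d)) : OC (permO σ) = σ.permMatrix ℂ := by
  ext a b
  simp [OC, permO, Equiv.Perm.permMatrix, PEquiv.toMatrix_apply, apply_ite Complex.ofReal]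

lemma perm_conj (σ : Equiv.Perm (Fin d)) (M : Matrix (Fin d) (Fin d) ℂ) (a b : Fin d) :
    (σ.permMatrix ℂ * M * (σ.permMatrix ℂ)ᵀ) a b = M (σ a) (σ b) := by
  rw [Equiv.Perm.permMatrix, ← PEquiv.toMatrix_symm, ← Equiv.toPEquiv_symm,
    PEquiv.toMatrix_toPEquiv_mul]
  rw [show σ.symm.toPEquiv.toMatrix = (σ.symm).toPEquiv.toMatrix from rfl,
    PEquiv.mul_toMatrix_toPEquiv]
  simp [Matrix.submatrix_apply]

lemma diag_conj (g : Fin d → ℂ) (M : Matrix (Fin d) (Fin d) ℂ) (a b : Fin d) :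
    (Matrix.diagonal g * M * (Matrix.diagonal g)ᵀ) a b = g a * M a b * g b := by
  rw [Matrix.diagonal_transpose]
  simp [Matrix.diagonal_mul, Matrix.mul_diagonal]

section main
variable [MeasurableSpace (Matrix.orthogonalGroup (Fin d) ℝ)]
    [BorelSpace (Matrix.orthogonalGroup (Fin d) ℝ)]
    (μ : Measure (Matrix.orthogonalGroup (Fin d) ℝ))
    [μ.IsHaarMeasure] [IsProbabilityMeasure μ]

lemma integrable_conj (A : Matrix (Fin d) (Fin d) ℂ) :
    @Integrable _ (PseudoMetricSpace.toUniformSpace.toTopologicalSpace)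
      SeminormedAddGroup.toContinuousENorm _ _
      (fun O : Matrix.orthogonalGroup (Fin d) ℝ => OC O * A * (OC O)ᵀ) μ := by
  have hc : @Continuous _ _ _ PseudoMetricSpace.toUniformSpace.toTopologicalSpace
      (fun O : Matrix.orthogonalGroup (Fin d) ℝ => OC O * A * (OC O)ᵀ) := continuous_conj A
  refine (integrable_const ((d:ℝ)*d*‖A‖)).mono' (hc.aestronglyMeasurable) ?_
  exact Filter.Eventually.of_forall (norm_conj_le A)

lemma invar (A : Matrix (Fin d) (Fin d) ℂ) (P : Matrix.orthogonalGroup (Fin d) ℝ) :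
    OC P * (∫ O, OC O * A * (OC O)ᵀ ∂μ) * (OC P)ᵀ = ∫ O, OC O * A * (OC O)ᵀ ∂μ := by
  let L : Matrix (Fin d) (Fin d) ℂ →L[ℂ] Matrix (Fin d) (Fin d) ℂ :=
    LinearMap.toContinuousLinearMap
      ((LinearMap.mulRight ℂ (OC P)ᵀ).comp (LinearMap.mulLeft ℂ (OC P)))
  have hL : ∀ X, L X = OC P * X * (OC P)ᵀ := fun X => rfl
  calc OC P * (∫ O, OC O * A * (OC O)ᵀ ∂μ) * (OC P)ᵀ
      = L (∫ O, OC O * A * (OC O)ᵀ ∂μ) := (hL _).symm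
    _ = ∫ O, L (OC O * A * (OC O)ᵀ) ∂μ := (L.integral_comp_comm (integrable_conj μ A)).symm
    _ = ∫ O, OC (P * O) * A * (OC (P * O))ᵀ ∂μ := by
        congr 1; funext O
        rw [hL, OC_mul, Matrix.transpose_mul]
        simp [mul_assoc]
    _ = ∫ O, OC O * A * (OC O)ᵀ ∂μ :=
        integral_mul_left_eq_self (fun O => OC O * A * (OC O)ᵀ) P

lemma trace_integral (A : Matrix (Fin d) (Fin d) ℂ) :
    (∫ O, OC O * A * (OC O)ᵀ ∂μ).trace = A.trace := by
  let T : Matrix (Fin d) (Fin d) ℂ →L[ℂ] ℂ :=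
    LinearMap.toContinuousLinearMap (Matrix.traceLinearMap (Fin d) ℂ ℂ)
  have hT : ∀ X : Matrix (Fin d) (Fin d) ℂ, T X = X.trace := fun _ => rfl
  rw [← hT, show T (∫ O, OC O * A * (OC O)ᵀ ∂μ) = ∫ O, T (OC O * A * (OC O)ᵀ) ∂μ from
    (T.integral_comp_comm (integrable_conj μ A)).symm]
  have key : ∀ O : Matrix.orthogonalGroup (Fin d) ℝ, T (OC O * A * (OC O)ᵀ) = A.trace := by
    intro O
    rw [hT, Matrix.trace_mul_cycle, OC_transpose_mul_self, one_mul]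
  simp only [key]
  simp

theorem stmt_0' (hd : 1 ≤ d) (A : Matrix (Fin d) (Fin d) ℂ) :
    ∫ O, OC O * A * (OC O)ᵀ ∂μ = (A.trace / (d : ℂ)) • (1 : Matrix (Fin d) (Fin d) ℂ) := by
  set M := ∫ O, OC O * A * (OC O)ᵀ ∂μ with hM
  have hinv := invar μ A
  have hoff : ∀ i j, i ≠ j → M i j = 0 := by
    intro i j hij
    have h := hinv (signO i)
    rw [OC_signO] at h
    have h2 := congrFun (congrFun h i) j
    rw [diag_conj] at h2
    rw [if_pos rfl, if_neg (Ne.symm hij)] at h2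
    rw [← hM] at h2
    linear_combination (-1/2 : ℂ) * h2
  have hdiag : ∀ i, M i i = M ⟨0, hd⟩ ⟨0, hd⟩ := by
    intro i
    have h := hinv (permO (Equiv.swap i ⟨0, hd⟩))
    rw [OC_permO] at h
    have h2 := congrFun (congrFun h i) i
    rw [perm_conj] at h2
    rw [← hM] at h2
    simpa [Equiv.swap_apply_left] using h2.symm
  have hMeq : M = M ⟨0, hd⟩ ⟨0, hd⟩ • (1 : Matrix (Fin d) (Fin d) ℂ) := by
    ext a b
    by_cases hab : a = b
    · subst hab; simp [Matrix.one_apply, hdiag a]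
    · simp [Matrix.one_apply, hab, hoff a b hab]
  have htr : M.trace = A.trace := trace_integral μ A
  rw [hMeq] at htr
  rw [Matrix.trace_smul, Matrix.trace_one] at htr
  have hd0 : (d : ℂ) ≠ 0 := Nat.cast_ne_zero.mpr (by omega)
  rw [hMeq]
  congr 1
  field_simp
  rw [← htr]
  simp [smul_eq_mul, mul_comm]

end main

/-- the first moment of the Haar measure on the orthogonal group. -/
theorem stmt_0 (d : ℕ) (hd : 1 ≤ d)
    [MeasurableSpace (Matrix.orthogonalGroup (Fin d) ℝ)]
    [BorelSpace (Matrix.orthogonalGroup (Fin d) ℝ)]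
    (μ : Measure (Matrix.orthogonalGroup (Fin d) ℝ))
    [μ.IsHaarMeasure] [IsProbabilityMeasure μ]
    (A : Matrix (Fin d) (Fin d) ℂ) :
    ∫ O, OC O * A * (OC O)ᵀ ∂μ = (A.trace / (d : ℂ)) • (1 : Matrix (Fin d) (Fin d) ℂ) :=
  stmt_0' μ hd A
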